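/- Under common support and conditionally independent censoring, the bias of the naive IPS estimator for the policy value V(π_e,t) = E_{p(x)π_e(a|x)}[S(x,a,t)] equals E_{p(x)π_e(a|x)}[S(x,a,t)(G(t|x,a) − 1)], and this bias is non-positive (i.e., naive IPS systematically underestimates the policy value). -/

import Mathlib

open MeasureTheory Finset

/-- The bias of the naive IPS estimator equals
`E_{p, π_e}[S (G - 1)]` and is non-positive. -/
theorem naive_ips_bias
    {X A Ω : Type*} [Fintype X] [Fintype A] [MeasurableSpace Ω]
    (p : X → ℝ) (hp : ∀ x, 0 ≤ p x) (hp1 : ∑ x, p x = 1)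
    (π0 πe : X → A → ℝ)
    (hπ0 : ∀ x a, 0 ≤ π0 x a) (hπ0s : ∀ x, ∑ a, π0 x a = 1)
    (hπe : ∀ x a, 0 ≤ πe x a) (hπes : ∀ x, ∑ a, πe x a = 1)
    (hsupp : ∀ x a, 0 < πe x a → 0 < π0 x a)
    (μ : X → A → Measure Ω) [∀ x a, IsProbabilityMeasure (μ x a)]
    (L C : Ω → ℝ) (hL : Measurable L) (hC : Measurable C)
    (hInd : ∀ x a (s u : ℝ), μ x a {ω | s < L ω ∧ u < C ω} =
      μ x a {ω | s < L ω} * μ x a {ω | u < C ω})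
    (t : ℝ) :
    ((∑ x, p x * ∑ a, π0 x a *
        ∫ ω, (πe x a / π0 x a) *
          Set.indicator {ω : Ω | t < min (L ω) (C ω)} (fun _ => (1 : ℝ)) ω ∂(μ x a))
      - ∑ x, p x * ∑ a, πe x a * (μ x a {ω | t < L ω}).toReal
      = ∑ x, p x * ∑ a, πe x a *
          ((μ x a {ω | t < L ω}).toReal * ((μ x a {ω | t < C ω}).toReal - 1)))
    ∧ (∑ x, p x * ∑ a, πe x a *
          ((μ x a {ω | t < L ω}).toReal * ((μ x a {ω | t < C ω}).toReal - 1))) ≤ 0 := by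
  have hkey : ∀ x a, π0 x a *
      ∫ ω, (πe x a / π0 x a) *
        Set.indicator {ω : Ω | t < min (L ω) (C ω)} (fun _ => (1 : ℝ)) ω ∂(μ x a)
      = πe x a * ((μ x a {ω | t < L ω}).toReal * (μ x a {ω | t < C ω}).toReal) := by
    intro x a
    have hset : {ω : Ω | t < min (L ω) (C ω)} = {ω | t < L ω ∧ t < C ω} := by
      ext ω; simp [lt_min_iff]
    have hmeas : MeasurableSet {ω : Ω | t < min (L ω) (C ω)} :=
      measurableSet_lt measurable_const (hL.min hC)
    have hint : ∫ ω, (πe x a / π0 x a) *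
        Set.indicator {ω : Ω | t < min (L ω) (C ω)} (fun _ => (1 : ℝ)) ω ∂(μ x a)
        = (πe x a / π0 x a) * ((μ x a {ω | t < min (L ω) (C ω)}).toReal) := by
      rw [MeasureTheory.integral_const_mul, integral_indicator_const _ hmeas]
      simp [Measure.real]
    rw [hint, hset, hInd, ENNReal.toReal_mul]
    rcases (hπe x a).lt_or_eq with h | h
    · have h0 := hsupp x a h
      field_simp
    · simp [← h]
  constructor
  · rw [← Finset.sum_sub_distrib]
    apply Finset.sum_congr rfl
    intro x _
    rw [← mul_sub, ← Finset.sum_sub_distrib]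
    congr 1
    apply Finset.sum_congr rfl
    intro a _
    rw [hkey x a]
    ring
  · apply Finset.sum_nonpos
    intro x _
    apply mul_nonpos_of_nonneg_of_nonpos (hp x)
    apply Finset.sum_nonpos
    intro a _
    apply mul_nonpos_of_nonneg_of_nonpos (hπe x a)
    apply mul_nonpos_of_nonneg_of_nonpos ENNReal.toReal_nonneg
    have : (μ x a {ω | t < C ω}).toReal ≤ 1 := by
      have := prob_le_one (μ := μ x a) (s := {ω | t < C ω})
      exact ENNReal.toReal_le_of_le_ofReal zero_le_one (by simpa using this)
    linarith
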